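/- Let D be an acyclic digraph such that for every ordered pair of vertices of D there is at most one directed path from the first to the second. Then the line digraph L⃗(D) is acyclic and for every ordered pair of vertices of L⃗(D) there is at most one directed path from the first to the second. -/

import Mathlib

open SimpleGraph

/-- The shift graph `G_{n,2}`: vertices are pairs `(i,j)` with `i < j` in `Fin n`,
and `(i,j)` is adjacent to `(k,l)` iff `j = k` or `l = i`. -/
def ShiftGraph (n : ℕ) : SimpleGraph {p : Fin n × Fin n // p.1 < p.2} :=
  SimpleGraph.fromRel (fun p q => p.1.2 = q.1.1)

/-- The arcs of a digraph `D`. -/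
def Arcs {V : Type} (D : V → V → Prop) : Type := {e : V × V // D e.1 e.2}

/-- The line digraph `L⃗(D)`: there is an arc from `(a,b)` to `(c,d)` iff `b = c`. -/
def LineDigraph {V : Type} (D : V → V → Prop) : Arcs D → Arcs D → Prop :=
  fun e f => e.1.2 = f.1.1

/-- The underlying undirected (simple) graph of a digraph. -/
def UG {V : Type} (D : V → V → Prop) : SimpleGraph V := SimpleGraph.fromRel D

/-- The undirected line graph `L(D)`: the underlying undirected graph of the line digraph,
in which two arcs are adjacent iff the head of one equals the tail of the other. -/
def LineGraph {V : Type} (D : V → V → Prop) : SimpleGraph (Arcs D) :=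
  UG (LineDigraph D)

/-- A digraph is an oriented graph if its arc relation is irreflexive and between any
two vertices at most one of the two opposite arcs is present. -/
def Oriented {V : Type} (D : V → V → Prop) : Prop :=
  Irreflexive D ∧ ∀ a b, D a b → ¬ D b a

/-- A digraph is acyclic if it contains no directed cycle, equivalently no vertex is
reachable from itself by a nonempty directed walk. -/
def DigraphAcyclic {V : Type} (D : V → V → Prop) : Prop :=
  ∀ v, ¬ Relation.TransGen D v v

/-- The iterated line digraph: `(IterLine V D g).1` is the vertex type of `L⃗^g(D)` and
`(IterLine V D g).2` is its arc relation. -/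
def IterLine (V : Type) (D : V → V → Prop) : ℕ → (W : Type) × (W → W → Prop)
  | 0 => ⟨V, D⟩
  | g + 1 => ⟨Arcs (IterLine V D g).2, LineDigraph (IterLine V D g).2⟩

/-- `l` is (the list of vertices of) a directed path from `x` to `y` in the digraph `D`:
consecutive vertices are joined by arcs, the vertices are pairwise distinct, and the
list starts at `x` and ends at `y`. -/
def IsDipath {V : Type} (D : V → V → Prop) (x y : V) (l : List V) : Prop :=
  l.Chain' D ∧ l.head? = some x ∧ l.getLast? = some y ∧ l.Nodup

/-- A digraph has at most one directed path from any vertex to any other vertex. -/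
def UniqueDipaths {V : Type} (D : V → V → Prop) : Prop :=
  ∀ x y l₁ l₂, IsDipath D x y l₁ → IsDipath D x y l₂ → l₁ = l₂

/-- `D` is an orientation of the simple graph `G`. -/
def IsOrientationOf {V : Type} (G : SimpleGraph V) (D : V → V → Prop) : Prop :=
  (∀ a b, D a b → G.Adj a b) ∧ (∀ a b, G.Adj a b → (D a b ∨ D b a)) ∧
    (∀ a b, D a b → ¬ D b a)

/-- A simple graph has the AOP property if it admits an acyclic orientation with at most
one directed path between any ordered pair of vertices. -/
def HasAOP {V : Type} (G : SimpleGraph V) : Prop :=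
  ∃ D : V → V → Prop, IsOrientationOf G D ∧ DigraphAcyclic D ∧ UniqueDipaths D

/-- The tower function: `Tower g x` is `2^(2^(⋯^x))` with `g` twos. -/
def Tower : ℕ → ℕ → ℕ
  | 0, x => x
  | i + 1, x => 2 ^ Tower i x

/-- The graph `G` has degeneracy at most `k`: every nonempty (induced subgraph on a) set
of vertices contains a vertex with at most `k` neighbours inside the set. -/
def DegenLE {V : Type} (G : SimpleGraph V) (k : ℕ) : Prop :=
  ∀ s : Set V, s.Nonempty → ∃ v ∈ s, ({u ∈ s | G.Adj v u} : Set V).ncard ≤ k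


private lemma tg_line {V : Type} {D : V → V → Prop} {e f : Arcs D}
    (h : Relation.TransGen (LineDigraph D) e f) :
    Relation.TransGen D e.1.1 f.1.1 := by
  induction h with
  | single h => exact Relation.TransGen.single (h ▸ e.2)
  | @tail b c _ h ih => exact ih.tail (h ▸ b.2)

private lemma recon {V : Type} {D : V → V → Prop} :
    ∀ l₁ l₂ : List (Arcs D), l₁.Chain' (LineDigraph D) → l₂.Chain' (LineDigraph D) →
      l₁.map (fun e => e.1.2) = l₂.map (fun e => e.1.2) → l₁.head? = l₂.head? →
      l₁ = l₂ := by
  intro l₁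
  induction l₁ with
  | nil => intro l₂ _ _ hm _; cases l₂ <;> simp_all
  | cons e t₁ ih =>
    intro l₂ hc₁ hc₂ hm hh
    cases l₂ with
    | nil => simp at hm
    | cons f t₂ =>
      have hef : e = f := by simpa using hh
      subst hef
      simp only [List.map_cons, List.cons.injEq] at hm
      have hmt : t₁.map (fun e => e.1.2) = t₂.map (fun e => e.1.2) := hm.2
      have hht : t₁.head? = t₂.head? := by
        cases t₁ with
        | nil => cases t₂ with
          | nil => rfl
          | cons g₂ s₂ => simp at hmt
        | cons g₁ s₁ =>
          cases t₂ with
          | nil => simp at hmt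
          | cons g₂ s₂ =>
            have h₁ : e.1.2 = g₁.1.1 := (List.isChain_cons_cons.mp hc₁).1
            have h₂ : e.1.2 = g₂.1.1 := (List.isChain_cons_cons.mp hc₂).1
            have hh2 : g₁.1.2 = g₂.1.2 := by
              simp only [List.map_cons, List.cons.injEq] at hmt; exact hmt.1
            have : g₁ = g₂ := Subtype.ext (Prod.ext (h₁ ▸ h₂) hh2)
            simp [this]
      have := ih t₂ hc₁.tail hc₂.tail hmt hht
      rw [this]

private lemma chainV {V : Type} {D : V → V → Prop} :
    ∀ (l : List (Arcs D)), l.Chain' (LineDigraph D) →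
      ∀ a : V, (∀ e ∈ l.head?, a = e.1.1) →
      List.Chain' D (a :: l.map (fun e => e.1.2)) := by
  intro l
  induction l with
  | nil => intro _ a _; exact List.isChain_singleton a
  | cons e t ih =>
    intro hc a ha
    have hae : a = e.1.1 := ha e rfl
    refine List.isChain_cons_cons.mpr ⟨hae ▸ e.2, ?_⟩
    refine ih hc.tail e.1.2 ?_
    intro f hf
    cases t with
    | nil => simp at hf
    | cons g s =>
      have : g = f := by simpa using hf
      subst this
      exact (List.isChain_cons_cons.mp hc).1

private lemma nodupV {V : Type} {D : V → V → Prop} (hacyc : DigraphAcyclic D)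
    {l : List V} (hc : l.Chain' D) : l.Nodup := by
  have hc' : l.Chain' (Relation.TransGen D) := hc.imp (fun _ _ h => Relation.TransGen.single h)
  have pw : l.Pairwise (Relation.TransGen D) := List.isChain_iff_pairwise.mp hc'
  have h2 : l.Pairwise (· ≠ ·) := by
    refine List.Pairwise.imp ?_ pw
    intro a b h heq
    subst heq
    exact hacyc a h
  exact h2

/-- If `D` is an acyclic digraph with at most one directed path from
any vertex to any other, then its line digraph `L⃗(D)` is acyclic and also has at most
one directed path from any vertex to any other. -/
theorem stmt_17 {V : Type} (D : V → V → Prop) (hor : Oriented D)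
    (hacyc : DigraphAcyclic D) (huniq : UniqueDipaths D) :
    DigraphAcyclic (LineDigraph D) ∧ UniqueDipaths (LineDigraph D) := by
  constructor
  · intro e he
    exact hacyc e.1.1 (tg_line he)
  · intro x y l₁ l₂ h₁ h₂
    obtain ⟨hc₁, hh₁, hl₁, _⟩ := h₁
    obtain ⟨hc₂, hh₂, hl₂, _⟩ := h₂
    have key : ∀ (l : List (Arcs D)), l.Chain' (LineDigraph D) → l.head? = some x →
        l.getLast? = some y →
        IsDipath D x.1.1 y.1.2 (x.1.1 :: l.map (fun e => e.1.2)) := by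
      intro l hc hh hl
      have hch : List.Chain' D (x.1.1 :: l.map (fun e => e.1.2)) := by
        refine chainV l hc x.1.1 ?_
        intro e he
        rw [hh] at he
        simp at he
        rw [he]
      refine ⟨hch, by simp, ?_, nodupV hacyc hch⟩
      · have hne : l ≠ [] := by intro h; subst h; simp at hh
        have : (l.map (fun e => e.1.2)).getLast? = some y.1.2 := by
          rw [List.getLast?_map, hl]; rfl
        obtain ⟨e, t, rfl⟩ : ∃ e t, l = e :: t := by
          cases l with
          | nil => exact absurd rfl hne
          | cons e t => exact ⟨e, t, rfl⟩
        simpa using this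
    have d₁ := key l₁ hc₁ hh₁ hl₁
    have d₂ := key l₂ hc₂ hh₂ hl₂
    have := huniq _ _ _ _ d₁ d₂
    have hmap : l₁.map (fun e => e.1.2) = l₂.map (fun e => e.1.2) := by
      simpa using this
    exact recon l₁ l₂ hc₁ hc₂ hmap (hh₁.trans hh₂.symm)
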